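/- Assume q ≥ 2 and ν(∅) = 0. Then the (q−1)×(q−1) matrix I − ¼·I₂ is positive semidefinite, where I = E_{Z∼p}[(ν(Z) − Z_q ν(1) − W(Z)ᵀ φ̃)² · W(Z)W(Z)ᵀ] and I₂ = E_{Z∼p}[4·((ν(Z) + ν(1) − ν(1−Z))/2 − Z_q ν(1) − W(Z)ᵀ φ̃)² · W(Z)W(Z)ᵀ]. -/

import Mathlib

open Finset

/-- Shapley value of player `j` for value function `ν` on coalitions of `Fin q`. -/
noncomputable def shapley {q : ℕ} (ν : Finset (Fin q) → ℝ) (j : Fin q) : ℝ :=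
  ((q : ℝ))⁻¹ * ∑ C ∈ (Finset.univ.erase j).powerset,
    (((q - 1).choose C.card : ℝ))⁻¹ * (ν (insert j C) - ν C)

/-- The set of nonempty proper coalitions of `Fin q`. -/
def properCoalitions (q : ℕ) : Finset (Finset (Fin q)) :=
  Finset.univ.powerset.filter
    (fun C : Finset (Fin q) => C.Nonempty ∧ C ≠ Finset.univ)

/-- Shapley kernel weight of a coalition. -/
noncomputable def kernelWeight (q : ℕ) (C : Finset (Fin q)) : ℝ :=
  ((q : ℝ) - 1) /
    ((q.choose C.card : ℝ) * (C.card : ℝ) * ((q : ℝ) - (C.card : ℝ)))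

/-- Normalized Shapley kernel probability weights. -/
noncomputable def kernelProb (q : ℕ) (C : Finset (Fin q)) : ℝ :=
  kernelWeight q C / ∑ C' ∈ properCoalitions q, kernelWeight q C'

/-- The last player `q` (index `q - 1` in `Fin q`). -/
def lastPlayer (q : ℕ) (hq : 2 ≤ q) : Fin q := ⟨q - 1, by omega⟩

/-- Indicator `Z_q` of the last player belonging to the coalition `C`. -/
noncomputable def Zlast (q : ℕ) (hq : 2 ≤ q) (C : Finset (Fin q)) : ℝ :=
  if lastPlayer q hq ∈ C then 1 else 0

/-- The vector `W(Z) = Z̃ - Z_q · 1̃ ∈ ℝ^{q-1}` for the coalition `C` with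
indicator vector `Z`. -/
noncomputable def Wvec (q : ℕ) (hq : 2 ≤ q) (C : Finset (Fin q))
    (i : Fin (q - 1)) : ℝ :=
  (if Fin.castLE (Nat.sub_le q 1) i ∈ C then (1 : ℝ) else 0) - Zlast q hq C

/-- The first `q - 1` Shapley values `φ̃ ∈ ℝ^{q-1}`. -/
noncomputable def shapleyTrunc (q : ℕ) (ν : Finset (Fin q) → ℝ)
    (i : Fin (q - 1)) : ℝ :=
  shapley ν (Fin.castLE (Nat.sub_le q 1) i)

/-- The shapResidual `ν(Z) - Z_q ν(1) - W(Z)ᵀ φ̃`. -/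
noncomputable def shapResidual (q : ℕ) (hq : 2 ≤ q) (ν : Finset (Fin q) → ℝ)
    (C : Finset (Fin q)) : ℝ :=
  ν C - Zlast q hq C * ν Finset.univ
    - ∑ i, Wvec q hq C i * shapleyTrunc q ν i

/-- The paired shapResidual `(ν(Z) + ν(1) - ν(1 - Z))/2 - Z_q ν(1) - W(Z)ᵀ φ̃`. -/
noncomputable def pairedResidual (q : ℕ) (hq : 2 ≤ q) (ν : Finset (Fin q) → ℝ)
    (C : Finset (Fin q)) : ℝ :=
  (ν C + ν Finset.univ - ν (Finset.univ \ C)) / 2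
    - Zlast q hq C * ν Finset.univ
    - ∑ i, Wvec q hq C i * shapleyTrunc q ν i

/-- The matrix `ℐ = E_{Z ∼ p}[(ν(Z) - Z_q ν(1) - W(Z)ᵀφ̃)² W(Z) W(Z)ᵀ]`. -/
noncomputable def Imat (q : ℕ) (hq : 2 ≤ q) (ν : Finset (Fin q) → ℝ) :
    Matrix (Fin (q - 1)) (Fin (q - 1)) ℝ :=
  ∑ C ∈ properCoalitions q, kernelProb q C •
    Matrix.of (fun a b =>
      (shapResidual q hq ν C) ^ 2 * (Wvec q hq C a * Wvec q hq C b))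

/-- The matrix `ℐ₂` built from the paired residuals (with factor `4`). -/
noncomputable def I2mat (q : ℕ) (hq : 2 ≤ q) (ν : Finset (Fin q) → ℝ) :
    Matrix (Fin (q - 1)) (Fin (q - 1)) ℝ :=
  ∑ C ∈ properCoalitions q, kernelProb q C •
    Matrix.of (fun a b =>
      4 * (pairedResidual q hq ν C) ^ 2 * (Wvec q hq C a * Wvec q hq C b))


lemma mem_properCoalitions {q : ℕ} {C : Finset (Fin q)} :
    C ∈ properCoalitions q ↔ C.Nonempty ∧ C ≠ Finset.univ := by
  simp [properCoalitions]

lemma compl_mem_properCoalitions {q : ℕ} {C : Finset (Fin q)}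
    (h : C ∈ properCoalitions q) : Finset.univ \ C ∈ properCoalitions q := by
  rw [mem_properCoalitions] at h ⊢
  obtain ⟨⟨x, hx⟩, hC⟩ := h
  constructor
  · rw [Finset.sdiff_nonempty]
    intro hsub
    exact hC (Finset.eq_univ_iff_forall.2 fun y => hsub (Finset.mem_univ y))
  · intro he
    have : x ∈ Finset.univ \ C := by rw [he]; exact Finset.mem_univ x
    simp [hx] at this

lemma sdiff_sdiff_univ {q : ℕ} (C : Finset (Fin q)) :
    Finset.univ \ (Finset.univ \ C) = C := by
  rw [Finset.sdiff_sdiff_self_left, Finset.univ_inter]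

lemma card_sdiff_univ {q : ℕ} (C : Finset (Fin q)) :
    (Finset.univ \ C).card = q - C.card := by
  rw [Finset.card_sdiff_of_subset (Finset.subset_univ C)]
  simp

lemma kernelWeight_compl {q : ℕ} (C : Finset (Fin q)) :
    kernelWeight q (Finset.univ \ C) = kernelWeight q C := by
  have hle : C.card ≤ q := by
    simpa using Finset.card_le_univ C
  unfold kernelWeight
  rw [card_sdiff_univ, Nat.choose_symm hle, Nat.cast_sub hle]
  ring_nf

lemma kernelProb_compl {q : ℕ} (C : Finset (Fin q)) :
    kernelProb q (Finset.univ \ C) = kernelProb q C := by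
  unfold kernelProb
  rw [kernelWeight_compl]

lemma Zlast_compl {q : ℕ} (hq : 2 ≤ q) (C : Finset (Fin q)) :
    Zlast q hq (Finset.univ \ C) = 1 - Zlast q hq C := by
  unfold Zlast
  by_cases h : lastPlayer q hq ∈ C <;> simp [h]

lemma Wvec_compl {q : ℕ} (hq : 2 ≤ q) (C : Finset (Fin q)) (i : Fin (q - 1)) :
    Wvec q hq (Finset.univ \ C) i = - Wvec q hq C i := by
  unfold Wvec
  rw [Zlast_compl]
  by_cases h : Fin.castLE (Nat.sub_le q 1) i ∈ C <;> simp [h]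

lemma pairedResidual_compl {q : ℕ} (hq : 2 ≤ q) (ν : Finset (Fin q) → ℝ)
    (C : Finset (Fin q)) :
    pairedResidual q hq ν (Finset.univ \ C) = - pairedResidual q hq ν C := by
  unfold pairedResidual
  rw [sdiff_sdiff_univ, Zlast_compl]
  simp only [Wvec_compl, neg_mul, Finset.sum_neg_distrib]
  ring

lemma shapResidual_sub_compl {q : ℕ} (hq : 2 ≤ q) (ν : Finset (Fin q) → ℝ)
    (C : Finset (Fin q)) :
    shapResidual q hq ν C - shapResidual q hq ν (Finset.univ \ C)
      = 2 * pairedResidual q hq ν C := by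
  unfold shapResidual pairedResidual
  rw [Zlast_compl]
  simp only [Wvec_compl, neg_mul, Finset.sum_neg_distrib]
  ring

/-- the matrix `ℐ - ¼ ℐ₂` is positive semidefinite. -/
theorem Imat_sub_quarter_I2mat_posSemidef (q : ℕ) (hq : 2 ≤ q)
    (ν : Finset (Fin q) → ℝ) (hν : ν ∅ = 0) :
    (Imat q hq ν - (1 / 4 : ℝ) • I2mat q hq ν).PosSemidef := by
  classical
  set P := properCoalitions q with hPdef
  set r : Finset (Fin q) → ℝ := shapResidual q hq ν with hrdef
  set pr : Finset (Fin q) → ℝ := pairedResidual q hq ν with hprdef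
  set g : Finset (Fin q) → ℝ :=
    fun C => kernelProb q C * (r C ^ 2 - pr C ^ 2) with hgdef
  have hentry : ∀ a b, (Imat q hq ν - (1 / 4 : ℝ) • I2mat q hq ν) a b
      = ∑ C ∈ P, g C * (Wvec q hq C a * Wvec q hq C b) := by
    intro a b
    simp only [Matrix.sub_apply, Matrix.smul_apply, Imat, I2mat, Matrix.sum_apply,
      Matrix.smul_apply, Matrix.of_apply, smul_eq_mul, Finset.mul_sum,
      ← Finset.sum_sub_distrib]
    exact Finset.sum_congr rfl fun C _ => by simp only [hgdef, hrdef, hprdef]; ring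
  have hw0 : ∀ C : Finset (Fin q), 0 ≤ kernelWeight q C := by
    intro C
    have hle : (C.card : ℝ) ≤ q := by
      exact_mod_cast (by simpa using Finset.card_le_univ C : C.card ≤ q)
    have hq' : (2 : ℝ) ≤ q := by exact_mod_cast hq
    unfold kernelWeight
    apply div_nonneg (by linarith)
    have h1 : (0 : ℝ) ≤ (q.choose C.card : ℝ) := by positivity
    have h2 : (0 : ℝ) ≤ (C.card : ℝ) := by positivity
    exact mul_nonneg (mul_nonneg h1 h2) (by linarith)
  have hp0 : ∀ C : Finset (Fin q), 0 ≤ kernelProb q C := fun C =>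
    div_nonneg (hw0 C) (Finset.sum_nonneg fun C' _ => hw0 C')
  refine Matrix.PosSemidef.of_dotProduct_mulVec_nonneg ?_ ?_
  · show (Imat q hq ν - (1 / 4 : ℝ) • I2mat q hq ν).conjTranspose = _
    ext a b
    rw [Matrix.conjTranspose_apply, star_trivial, hentry, hentry]
    exact Finset.sum_congr rfl fun C _ => by ring
  · intro x
    set t : Finset (Fin q) → ℝ := fun C => ∑ i, Wvec q hq C i * x i with htdef
    have hmv : ∀ a, ((Imat q hq ν - (1 / 4 : ℝ) • I2mat q hq ν).mulVec x) a
        = ∑ C ∈ P, g C * (Wvec q hq C a * t C) := by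
      intro a
      rw [Matrix.mulVec, dotProduct]
      simp_rw [hentry, Finset.sum_mul]
      rw [Finset.sum_comm]
      refine Finset.sum_congr rfl fun C _ => ?_
      simp only [htdef, Finset.mul_sum]
      exact Finset.sum_congr rfl fun i _ => by ring
    have hquad : dotProduct (star x) ((Imat q hq ν - (1 / 4 : ℝ) • I2mat q hq ν).mulVec x)
        = ∑ C ∈ P, g C * t C ^ 2 := by
      rw [dotProduct]
      simp_rw [star_trivial, hmv, Finset.mul_sum]
      rw [Finset.sum_comm]
      refine Finset.sum_congr rfl fun C _ => ?_
      have : ∑ a, x a * (g C * (Wvec q hq C a * t C))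
          = (∑ a, Wvec q hq C a * x a) * (g C * t C) := by
        rw [Finset.sum_mul]
        exact Finset.sum_congr rfl fun a _ => by ring
      rw [this]
      show t C * (g C * t C) = g C * t C ^ 2
      ring
    rw [hquad]
    -- facts about the complement
    have htc : ∀ C, t (Finset.univ \ C) = - t C := by
      intro C
      simp only [htdef, Wvec_compl]
      rw [← Finset.sum_neg_distrib]
      exact Finset.sum_congr rfl fun i _ => by ring
    -- reindex by complement
    have hswap : ∑ C ∈ P, g C * t C ^ 2
        = ∑ C ∈ P, g (Finset.univ \ C) * t (Finset.univ \ C) ^ 2 := by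
      refine Finset.sum_nbij' (fun C => Finset.univ \ C) (fun C => Finset.univ \ C)
        (fun C hC => compl_mem_properCoalitions hC)
        (fun C hC => compl_mem_properCoalitions hC)
        (fun C _ => sdiff_sdiff_univ C) (fun C _ => sdiff_sdiff_univ C)
        (fun C _ => ?_)
      rw [sdiff_sdiff_univ]
    have hkey : ∑ C ∈ P, g C * t C ^ 2
        = ∑ C ∈ P, kernelProb q C *
            ((r C + r (Finset.univ \ C)) / 2) ^ 2 * t C ^ 2 := by
      have h2 : (2 : ℝ) * (∑ C ∈ P, g C * t C ^ 2)
          = 2 * (∑ C ∈ P, kernelProb q C *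
              ((r C + r (Finset.univ \ C)) / 2) ^ 2 * t C ^ 2) := by
        calc (2 : ℝ) * (∑ C ∈ P, g C * t C ^ 2)
            = ∑ C ∈ P, (g C * t C ^ 2
                + g (Finset.univ \ C) * t (Finset.univ \ C) ^ 2) := by
              rw [Finset.sum_add_distrib, ← hswap]; ring
          _ = _ := by
              rw [Finset.mul_sum]
              refine Finset.sum_congr rfl fun C _ => ?_
              have hpc : kernelProb q (Finset.univ \ C) = kernelProb q C :=
                kernelProb_compl C
              have hprc : pr (Finset.univ \ C) = - pr C := by
                simp only [hprdef]; exact pairedResidual_compl hq ν C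
              have hrr : r C - r (Finset.univ \ C) = 2 * pr C := by
                simp only [hrdef, hprdef]; exact shapResidual_sub_compl hq ν C
              have hprval : pr C = (r C - r (Finset.univ \ C)) / 2 := by
                linarith
              simp only [hgdef, hpc, hprc, htc, hprval]
              ring
      linarith
    rw [hkey]
    refine Finset.sum_nonneg fun C _ => ?_
    have := hp0 C
    positivity
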